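/- arXiv:2201.00489 — 3 statements merged into one kernel-verified Lean document; each statement's English description precedes it below -/
import Mathlib

section
/- Let f : ℕ → ℕ and define g(q) = min(f(q), ⌈q^{3/2}⌉). If f is such that q ↦ f(q)/q is nondecreasing, then q ↦ g(q)/q is nondecreasing, and if additionally Σ 1/f(q) < ∞ then Σ 1/g(q) < ∞. -/
lemma rpow32 (x : ℝ) (hx : 0 ≤ x) : x ^ ((3:ℝ)/2) = Real.sqrt (x^3) := by
  rw [Real.sqrt_eq_rpow, ← Real.rpow_natCast x 3, ← Real.rpow_mul hx]
  norm_num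

lemma ceil32 (x : ℝ) (m : ℕ) (hx : 0 ≤ x) (hm : 0 < m)
    (h1 : ((m:ℝ)-1)^2 < x^3) (h2 : x^3 ≤ (m:ℝ)^2) : ⌈x^((3:ℝ)/2)⌉₊ = m := by
  rw [rpow32 x hx]
  have hs := Real.sq_sqrt (show (0:ℝ) ≤ x^3 by positivity)
  have hnn := Real.sqrt_nonneg (x^3)
  have hm1 : (1:ℝ) ≤ m := by exact_mod_cast hm
  rw [Nat.ceil_eq_iff hm.ne']
  refine ⟨?_, ?_⟩
  · rw [Nat.cast_pred hm]; nlinarith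
  · nlinarith

set_option maxHeartbeats 1000000 in
lemma key (q : ℕ) (hq : 1 ≤ q) :
    (⌈(q:ℝ)^((3:ℝ)/2)⌉₊ : ℝ) / q ≤ (⌈((q:ℝ)+1)^((3:ℝ)/2)⌉₊ : ℝ) / ((q:ℝ)+1) := by
  have hq0 : (0:ℝ) < q := by exact_mod_cast hq
  rw [div_le_div_iff₀ hq0 (by linarith)]
  have e1 : ⌈(1:ℝ)^((3:ℝ)/2)⌉₊ = 1 := ceil32 1 1 (by norm_num) (by norm_num) (by norm_num) (by norm_num)
  have e2 : ⌈(2:ℝ)^((3:ℝ)/2)⌉₊ = 3 := ceil32 2 3 (by norm_num) (by norm_num) (by norm_num) (by norm_num)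
  have e3 : ⌈(3:ℝ)^((3:ℝ)/2)⌉₊ = 6 := ceil32 3 6 (by norm_num) (by norm_num) (by norm_num) (by norm_num)
  have e4 : ⌈(4:ℝ)^((3:ℝ)/2)⌉₊ = 8 := ceil32 4 8 (by norm_num) (by norm_num) (by norm_num) (by norm_num)
  have e5 : ⌈(5:ℝ)^((3:ℝ)/2)⌉₊ = 12 := ceil32 5 12 (by norm_num) (by norm_num) (by norm_num) (by norm_num)
  rcases lt_or_ge q 5 with h5 | h5
  · interval_cases q <;> norm_num [e1, e2, e3, e4, e5]
  · -- q ≥ 5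
    have hx5 : (5:ℝ) ≤ q := by exact_mod_cast h5
    set x : ℝ := (q:ℝ)
    set a := Real.sqrt x with ha'
    set b := Real.sqrt (x+1) with hb'
    have ha : 0 ≤ a := Real.sqrt_nonneg _
    have hb : 0 ≤ b := Real.sqrt_nonneg _
    have ha2 : a^2 = x := Real.sq_sqrt (by positivity)
    have hb2 : b^2 = x + 1 := Real.sq_sqrt (by positivity)
    have hxa : x ^ ((3:ℝ)/2) = x * a := by
      rw [show (3:ℝ)/2 = 1 + 1/2 by norm_num, Real.rpow_add hq0, Real.rpow_one, ha', Real.sqrt_eq_rpow]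
    have hxb : (x+1) ^ ((3:ℝ)/2) = (x+1) * b := by
      rw [show (3:ℝ)/2 = 1 + 1/2 by norm_num, Real.rpow_add (by linarith), Real.rpow_one, hb', Real.sqrt_eq_rpow]
    have hub : (⌈x^((3:ℝ)/2)⌉₊ : ℝ) < x * a + 1 := by
      rw [← hxa]; exact Nat.ceil_lt_add_one (by positivity)
    have hlb : (x+1) * b ≤ (⌈(x+1)^((3:ℝ)/2)⌉₊ : ℝ) := by
      rw [← hxb]; exact Nat.le_ceil _
    have hkey : x * a + 1 ≤ x * b := by
      have hA : 2 ≤ a := by nlinarith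
      have hB : b ≤ a + 1/4 := by nlinarith
      have hab : a + b ≤ x := by nlinarith
      have hba : a ≤ b := by nlinarith
      nlinarith [mul_nonneg (sub_nonneg.2 hab) (sub_nonneg.2 hba)]
    have s1 : (⌈x^((3:ℝ)/2)⌉₊:ℝ) ≤ x * b := by linarith
    have s2 : (⌈x^((3:ℝ)/2)⌉₊:ℝ) * (x+1) ≤ (x*b) * (x+1) :=
      mul_le_mul_of_nonneg_right s1 (by linarith)
    have s3 : (x*b) * (x+1) = ((x+1)*b) * x := by ring
    have s4 : ((x+1)*b) * x ≤ (⌈(x+1)^((3:ℝ)/2)⌉₊:ℝ) * x :=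
      mul_le_mul_of_nonneg_right hlb (by linarith)
    linarith


/-- If `f : ℕ → ℕ` has `f q ≥ 1` for `q ≥ 1`, `q ↦ f q / q` nondecreasing and
`∑ 1 / f q < ∞`, then `g q := min (f q) ⌈q^{3/2}⌉` also has `q ↦ g q / q`
nondecreasing and `∑ 1 / g q < ∞`. -/
theorem stmt_1 (f : ℕ → ℕ) (hf1 : ∀ q, 1 ≤ q → 1 ≤ f q)
    (hmono : ∀ q, 1 ≤ q → (f q : ℝ) / q ≤ (f (q + 1) : ℝ) / (q + 1))
    (hsum : Summable fun q : ℕ => 1 / (f q : ℝ))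
    (g : ℕ → ℕ) (hg : ∀ q, g q = min (f q) ⌈(q : ℝ) ^ ((3 : ℝ) / 2)⌉₊) :
    (∀ q, 1 ≤ q → (g q : ℝ) / q ≤ (g (q + 1) : ℝ) / (q + 1)) ∧
      Summable fun q : ℕ => 1 / (g q : ℝ) := by
  constructor
  · intro q hq
    have hq0 : (0:ℝ) < q := by exact_mod_cast hq
    rw [hg q, hg (q+1)]
    push_cast
    rw [← min_div_div_right hq0.le, ← min_div_div_right (by linarith : (0:ℝ) ≤ (q:ℝ)+1)]
    exact le_min ((min_le_left _ _).trans (hmono q hq))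
      ((min_le_right _ _).trans (key q hq))
  · have hceil : Summable (fun q : ℕ => 1 / (⌈(q:ℝ)^((3:ℝ)/2)⌉₊ : ℝ)) := by
      apply Summable.of_nonneg_of_le (fun q => by positivity) _
        ((Real.summable_nat_rpow).2 (by norm_num : (-(3:ℝ)/2) < -1))
      intro q
      rcases Nat.eq_zero_or_pos q with rfl | hq
      · simp [Real.zero_rpow (by norm_num : ((3:ℝ)/2) ≠ 0),
          Real.zero_rpow (by norm_num : (-(3:ℝ)/2) ≠ 0)]
      · have hq1 : (1:ℝ) ≤ (q:ℝ) := by exact_mod_cast hq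
        have hy : (1:ℝ) ≤ (q:ℝ)^((3:ℝ)/2) := Real.one_le_rpow hq1 (by norm_num)
        have hc : (q:ℝ)^((3:ℝ)/2) ≤ ⌈(q:ℝ)^((3:ℝ)/2)⌉₊ := Nat.le_ceil _
        rw [show (-(3:ℝ)/2) = -((3:ℝ)/2) by ring, Real.rpow_neg (by positivity),
          ← one_div]
        exact one_div_le_one_div_of_le (by linarith) (by linarith)
    apply Summable.of_nonneg_of_le (fun q => by positivity) _ (hsum.add hceil)
    intro q
    rw [hg q]
    rcases Nat.eq_zero_or_pos q with rfl | hq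
    · simp [Real.zero_rpow (by norm_num : ((3:ℝ)/2) ≠ 0)]
    · have hfq := hf1 q hq
      have t1 : (0:ℝ) ≤ 1 / (f q : ℝ) := by positivity
      have t2 : (0:ℝ) ≤ 1 / (⌈(q:ℝ)^((3:ℝ)/2)⌉₊ : ℝ) := by positivity
      rcases min_cases (f q) ⌈(q:ℝ)^((3:ℝ)/2)⌉₊ with ⟨h, _⟩ | ⟨h, _⟩ <;> rw [h]
      · linarith
      · linarith
end

section
/- Let T be an invertible measure-preserving transformation of a probability space and B a measurable set. Suppose for each fixed ℓ ∈ ℕ the sequence {ℓ t_n} is mixing for T, i.e. μ(T^{ℓ t_n} A ∩ C) → μ(A)μ(C) for all measurable A, C. Then for any ε > 0 there exist L and N such that for all n ≥ N, ∫ |(1/L) Σ_{ℓ=1}^{L} χ_B∘T^{-ℓ t_n} − μ(B)| dμ < ε. -/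
open MeasureTheory Filter

def iterZ {α : Type*} [MeasurableSpace α] (T : α ≃ᵐ α) : ℤ → α → α
  | Int.ofNat n => (⇑T)^[n]
  | Int.negSucc n => (⇑T.symm)^[n + 1]

section helpers

variable {X : Type*} [MeasurableSpace X] (T : X ≃ᵐ X)

lemma iterZ_eq_perm (k : ℤ) : iterZ T k = ⇑((T.toEquiv : Equiv.Perm X) ^ k) := by
  cases k with
  | ofNat n =>
      show (⇑T)^[n] = _
      rw [Int.ofNat_eq_coe, zpow_natCast, Equiv.Perm.coe_pow]
      rfl
  | negSucc n =>
      show (⇑T.symm)^[n + 1] = _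
      rw [zpow_negSucc, ← inv_pow, Equiv.Perm.coe_pow]
      rfl

lemma iterZ_measurable (k : ℤ) : Measurable (iterZ T k) := by
  cases k with
  | ofNat n => exact T.measurable.iterate n
  | negSucc n => exact T.symm.measurable.iterate (n + 1)

lemma iterZ_add (a b : ℤ) (x : X) : iterZ T (a + b) x = iterZ T a (iterZ T b x) := by
  simp only [iterZ_eq_perm, zpow_add, Equiv.Perm.coe_mul, Function.comp_apply]

lemma iterZ_image (k : ℤ) (S : Set X) : iterZ T (-k) '' S = iterZ T k ⁻¹' S := by
  rw [iterZ_eq_perm, iterZ_eq_perm, Equiv.image_eq_preimage_symm]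
  rw [← Equiv.Perm.inv_def, ← zpow_neg, neg_neg]

lemma iterZ_mp {μ : Measure X} (hT : MeasurePreserving T μ μ) (k : ℤ) :
    MeasurePreserving (iterZ T k) μ μ := by
  cases k with
  | ofNat n => exact hT.iterate n
  | negSucc n => exact (hT.symm T).iterate (n + 1)

end helpers

/-- If for each fixed `ℓ ≥ 1` the sequence `{ℓ t_n}` is mixing for `T`, then for every
`ε > 0` there are `L` and `N` so that for all `n ≥ N`,
`∫ |(1/L) ∑_{ℓ=1}^{L} χ_B ∘ T^{-ℓ t_n} − μ(B)| dμ < ε`. -/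
theorem stmt_5 {X : Type*} [MeasurableSpace X] (μ : Measure X) [IsProbabilityMeasure μ]
    (T : X ≃ᵐ X) (hT : MeasurePreserving T μ μ) (t : ℕ → ℤ)
    (B : Set X) (hB : MeasurableSet B)
    (hmix : ∀ ℓ : ℕ, 1 ≤ ℓ → ∀ A C : Set X, MeasurableSet A → MeasurableSet C →
      Tendsto (fun n => (μ (iterZ T ((ℓ : ℤ) * t n) '' A ∩ C)).toReal) atTop
        (nhds ((μ A).toReal * (μ C).toReal))) :
    ∀ ε : ℝ, 0 < ε → ∃ L N : ℕ, 1 ≤ L ∧ ∀ n, N ≤ n →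
      ∫ x, |(1 / (L : ℝ)) * ∑ ℓ ∈ Finset.Icc 1 L,
          Set.indicator B (fun _ => (1 : ℝ)) (iterZ T (-((ℓ : ℤ) * t n)) x)
        - (μ B).toReal| ∂μ < ε := by
  intro ε hε
  set b : ℝ := (μ B).toReal with hbdef
  have hb0 : 0 ≤ b := ENNReal.toReal_nonneg
  have hb1 : b ≤ 1 := by
    have h := ENNReal.toReal_mono ENNReal.one_ne_top (prob_le_one (μ := μ) (s := B))
    simpa using h
  -- choose L
  obtain ⟨L, hLgt⟩ := exists_nat_gt (max 1 (8 / ε ^ 2))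
  have hL1 : 1 ≤ L := by
    have := lt_of_le_of_lt (le_max_left 1 (8 / ε ^ 2)) hLgt
    exact_mod_cast this.le
  have hLpos : (0 : ℝ) < L := Nat.cast_pos.mpr hL1
  have hLε : (1 : ℝ) / L < ε ^ 2 / 8 := by
    have h8 : 8 / ε ^ 2 < (L : ℝ) := lt_of_le_of_lt (le_max_right _ _) hLgt
    rw [div_lt_div_iff₀ hLpos (by positivity)]
    rw [div_lt_iff₀ (by positivity)] at h8
    nlinarith
  -- the shifted sets
  set E : ℤ → Set X := fun c => iterZ T (-c) ⁻¹' B with hEdef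
  have hEm : ∀ c, MeasurableSet (E c) := fun c => iterZ_measurable T (-c) hB
  have hEμ : ∀ c, μ (E c) = μ B := fun c =>
    (iterZ_mp T hT (-c)).measure_preimage hB.nullMeasurableSet
  have hpre : ∀ c d : ℤ, iterZ T d ⁻¹' E c = E (c - d) := by
    intro c d
    ext x
    simp only [hEdef, Set.mem_preimage]
    rw [← iterZ_add, neg_sub, sub_eq_neg_add]
  have hEB : E 0 = B := by
    ext x
    simp only [hEdef, Set.mem_preimage, neg_zero]
    show iterZ T (Int.ofNat 0) x ∈ B ↔ x ∈ B
    simp [iterZ]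
  have hshift : ∀ a c : ℤ, μ (E a ∩ E c) = μ (E (a - c) ∩ B) := by
    intro a c
    have h1 : E a ∩ E c = iterZ T (-c) ⁻¹' (E (a - c) ∩ B) := by
      have e1 : a - c - -c = a := by ring
      have e2 : (0 : ℤ) - -c = c := by ring
      rw [Set.preimage_inter, hpre, ← hEB, hpre, e1, e2]
    rw [h1]
    exact (iterZ_mp T hT (-c)).measure_preimage (((hEm _).inter hB).nullMeasurableSet)
  have hEimg : ∀ c : ℤ, E c = iterZ T c '' B := by
    intro c
    have h := iterZ_image T (-c) B
    rw [neg_neg] at h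
    exact h.symm
  -- pointwise identification of the integrand's indicator
  have hptwise : ∀ (c : ℤ) (x : X), Set.indicator B (fun _ => (1 : ℝ)) (iterZ T (-c) x)
      = Set.indicator (E c) (fun _ => (1 : ℝ)) x := fun c x => rfl
  set u : ℕ → ℕ → X → ℝ := fun n ℓ => Set.indicator (E ((ℓ : ℤ) * t n)) (fun _ => (1 : ℝ))
    with hudef
  have hu_int : ∀ n ℓ, Integrable (u n ℓ) μ := fun n ℓ => (integrable_const 1).indicator (hEm _)
  have hu_integral : ∀ n ℓ, ∫ x, u n ℓ x ∂μ = b := by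
    intro n ℓ
    have h := integral_indicator_one (μ := μ) (hEm ((ℓ : ℤ) * t n))
    simp only [hudef]
    rw [show (fun _ => (1:ℝ)) = (1 : X → ℝ) from rfl]
    rw [show ∫ x, Set.indicator (E ((ℓ:ℤ)*t n)) (1 : X → ℝ) x ∂μ
        = (μ (E ((ℓ:ℤ)*t n))).toReal from h, hEμ]
  have hu_mul : ∀ n ℓ ℓ' x, u n ℓ x * u n ℓ' x
      = Set.indicator (E ((ℓ:ℤ)*t n) ∩ E ((ℓ':ℤ)*t n)) (fun _ => (1:ℝ)) x := by
    intro n ℓ ℓ' x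
    simp only [hudef, Set.indicator]
    by_cases h1 : x ∈ E ((ℓ:ℤ)*t n) <;> by_cases h2 : x ∈ E ((ℓ':ℤ)*t n) <;>
      simp [h1, h2, Set.mem_inter_iff]
  have huu_int : ∀ n ℓ ℓ', Integrable (fun x => u n ℓ x * u n ℓ' x) μ := by
    intro n ℓ ℓ'
    simp only [hu_mul]
    exact (integrable_const 1).indicator ((hEm _).inter (hEm _))
  have huu_integral : ∀ n ℓ ℓ', ∫ x, u n ℓ x * u n ℓ' x ∂μ
      = (μ (E ((ℓ:ℤ)*t n) ∩ E ((ℓ':ℤ)*t n))).toReal := by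
    intro n ℓ ℓ'
    simp only [hu_mul]
    exact integral_indicator_one ((hEm _).inter (hEm _))
  -- integrability of the averages
  have hA_int : ∀ n, Integrable (fun x => ∑ ℓ ∈ Finset.Icc 1 L, u n ℓ x) μ :=
    fun n => integrable_finset_sum _ (fun ℓ _ => hu_int n ℓ)
  have hF_int : ∀ n, Integrable (fun x => (1/(L:ℝ)) * ∑ ℓ ∈ Finset.Icc 1 L, u n ℓ x - b) μ :=
    fun n => ((hA_int n).const_mul _).sub (integrable_const b)
  have expand : ∀ (n : ℕ) (x : X), ((1/(L:ℝ)) * ∑ ℓ ∈ Finset.Icc 1 L, u n ℓ x - b)^2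
      = (1/(L:ℝ))^2 * ∑ ℓ ∈ Finset.Icc 1 L, ∑ ℓ' ∈ Finset.Icc 1 L, u n ℓ x * u n ℓ' x
        - 2*b*(1/(L:ℝ)) * ∑ ℓ ∈ Finset.Icc 1 L, u n ℓ x + b^2 := by
    intro n x
    rw [← Finset.sum_mul_sum]
    ring
  have hFsq_int : ∀ n,
      Integrable (fun x => ((1/(L:ℝ)) * ∑ ℓ ∈ Finset.Icc 1 L, u n ℓ x - b)^2) μ := by
    intro n
    simp only [expand]
    exact (((integrable_finset_sum _ (fun ℓ _ => integrable_finset_sum _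
      (fun ℓ' _ => huu_int n ℓ ℓ'))).const_mul _).sub
      ((hA_int n).const_mul _)).add (integrable_const _)
  have hFsq : ∀ n, ∫ x, ((1/(L:ℝ)) * ∑ ℓ ∈ Finset.Icc 1 L, u n ℓ x - b)^2 ∂μ
      = (1/(L:ℝ))^2 * ∑ ℓ ∈ Finset.Icc 1 L, ∑ ℓ' ∈ Finset.Icc 1 L,
          (μ (E ((ℓ:ℤ)*t n) ∩ E ((ℓ':ℤ)*t n))).toReal - b^2 := by
    intro n
    have h1 : ∫ x, ∑ ℓ ∈ Finset.Icc 1 L, ∑ ℓ' ∈ Finset.Icc 1 L, u n ℓ x * u n ℓ' x ∂μ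
        = ∑ ℓ ∈ Finset.Icc 1 L, ∑ ℓ' ∈ Finset.Icc 1 L,
            (μ (E ((ℓ:ℤ)*t n) ∩ E ((ℓ':ℤ)*t n))).toReal := by
      rw [integral_finset_sum _ (fun ℓ _ => integrable_finset_sum _
        (fun ℓ' _ => huu_int n ℓ ℓ'))]
      refine Finset.sum_congr rfl (fun ℓ _ => ?_)
      rw [integral_finset_sum _ (fun ℓ' _ => huu_int n ℓ ℓ')]
      exact Finset.sum_congr rfl (fun ℓ' _ => huu_integral n ℓ ℓ')
    have h2 : ∫ x, ∑ ℓ ∈ Finset.Icc 1 L, u n ℓ x ∂μ = (L:ℝ) * b := by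
      rw [integral_finset_sum _ (fun ℓ _ => hu_int n ℓ)]
      simp [hu_integral, Finset.sum_const, Nat.card_Icc]
    simp only [expand]
    rw [integral_add, integral_sub, integral_const_mul, integral_const_mul, h1, h2,
        integral_const]
    · simp only [measure_univ, probReal_univ, ENNReal.toReal_one, smul_eq_mul, one_mul]
      have hL0 : (L:ℝ) ≠ 0 := ne_of_gt hLpos
      field_simp
      ring
    · exact (integrable_finset_sum _ (fun ℓ _ => integrable_finset_sum _
        (fun ℓ' _ => huu_int n ℓ ℓ'))).const_mul _
    · exact (hA_int n).const_mul _
    · exact ((integrable_finset_sum _ (fun ℓ _ => integrable_finset_sum _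
        (fun ℓ' _ => huu_int n ℓ ℓ'))).const_mul _).sub ((hA_int n).const_mul _)
    · exact integrable_const _
  -- off-diagonal convergence
  have hm_off : ∀ ℓ ℓ' : ℕ, ℓ' < ℓ →
      Tendsto (fun n => (μ (E ((ℓ:ℤ)*t n) ∩ E ((ℓ':ℤ)*t n))).toReal) atTop (nhds (b*b)) := by
    intro ℓ ℓ' hlt
    have hdn : ∀ n, (μ (E ((ℓ:ℤ)*t n) ∩ E ((ℓ':ℤ)*t n))).toReal
        = (μ (iterZ T (((ℓ - ℓ' : ℕ) : ℤ) * t n) '' B ∩ B)).toReal := by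
      intro n
      have harg : (ℓ:ℤ)*t n - (ℓ':ℤ)*t n = ((ℓ - ℓ' : ℕ) : ℤ) * t n := by
        rw [Nat.cast_sub hlt.le]
        ring
      rw [hshift, harg, hEimg]
    simp only [hdn]
    exact hmix (ℓ - ℓ') (Nat.sub_pos_of_lt hlt) B B hB hB
  -- convergence of the full expression
  have hlim : Tendsto (fun n => (1/(L:ℝ))^2 * ∑ ℓ ∈ Finset.Icc 1 L, ∑ ℓ' ∈ Finset.Icc 1 L,
      (μ (E ((ℓ:ℤ)*t n) ∩ E ((ℓ':ℤ)*t n))).toReal - b^2) atTop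
      (nhds ((1/(L:ℝ))^2 * ∑ ℓ ∈ Finset.Icc 1 L, ∑ ℓ' ∈ Finset.Icc 1 L,
        (if ℓ = ℓ' then b else b^2) - b^2)) := by
    apply Tendsto.sub_const
    apply Tendsto.const_mul
    apply tendsto_finset_sum
    intro ℓ _
    apply tendsto_finset_sum
    intro ℓ' _
    rcases lt_trichotomy ℓ ℓ' with h | h | h
    · rw [if_neg h.ne]
      have hcomm : (fun n => (μ (E ((ℓ:ℤ)*t n) ∩ E ((ℓ':ℤ)*t n))).toReal)
          = fun n => (μ (E ((ℓ':ℤ)*t n) ∩ E ((ℓ:ℤ)*t n))).toReal := by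
        funext n; rw [Set.inter_comm]
      rw [hcomm, sq]
      exact hm_off ℓ' ℓ h
    · subst h
      simp only [if_pos rfl, Set.inter_self, hEμ]
      exact tendsto_const_nhds
    · rw [if_neg h.ne', sq]
      exact hm_off ℓ ℓ' h
  -- the limit value is at most 1/L
  have hval : ∀ ℓ ∈ Finset.Icc 1 L, (∑ ℓ' ∈ Finset.Icc 1 L, if ℓ = ℓ' then b else b^2)
      = (L:ℝ)*b^2 + (b - b^2) := by
    intro ℓ hℓ
    have hsplit : ∀ ℓ' : ℕ, (if ℓ = ℓ' then b else b^2)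
        = b^2 + (if ℓ = ℓ' then b - b^2 else 0) := by
      intro ℓ'; by_cases h : ℓ = ℓ' <;> simp [h]
    simp only [hsplit, Finset.sum_add_distrib, Finset.sum_const, Finset.sum_ite_eq, hℓ,
      if_pos, Nat.card_Icc, nsmul_eq_mul]
    push_cast [Nat.add_sub_cancel]
    ring
  have hVle : (1/(L:ℝ))^2 * (∑ ℓ ∈ Finset.Icc 1 L, ∑ ℓ' ∈ Finset.Icc 1 L,
      (if ℓ = ℓ' then b else b^2)) - b^2 ≤ 1/(L:ℝ) := by
    rw [Finset.sum_congr rfl hval, Finset.sum_const, Nat.card_Icc, nsmul_eq_mul]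
    have hL0 : (L:ℝ) ≠ 0 := ne_of_gt hLpos
    have heq : (1/(L:ℝ))^2 * (((L + 1 - 1 : ℕ):ℝ) * ((L:ℝ)*b^2 + (b - b^2))) - b^2
        = (b - b^2)/(L:ℝ) := by
      push_cast [Nat.add_sub_cancel]
      field_simp
      ring
    rw [heq]
    have hbb : b - b^2 ≤ 1 := by nlinarith
    gcongr
  have hVlt : (1/(L:ℝ))^2 * (∑ ℓ ∈ Finset.Icc 1 L, ∑ ℓ' ∈ Finset.Icc 1 L,
      (if ℓ = ℓ' then b else b^2)) - b^2 < ε^2/4 := by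
    refine lt_of_le_of_lt hVle (lt_of_lt_of_le hLε ?_)
    nlinarith
  have hev := hlim.eventually_lt_const hVlt
  obtain ⟨N, hN⟩ := eventually_atTop.mp hev
  refine ⟨L, N, hL1, ?_⟩
  intro n hn
  have hFsqn : ∫ x, ((1/(L:ℝ)) * ∑ ℓ ∈ Finset.Icc 1 L, u n ℓ x - b)^2 ∂μ < ε^2/4 := by
    rw [hFsq n]; exact hN n hn
  have hgoal_eq : ∀ x : X, |(1 / (L : ℝ)) * ∑ ℓ ∈ Finset.Icc 1 L,
        Set.indicator B (fun _ => (1 : ℝ)) (iterZ T (-((ℓ : ℤ) * t n)) x) - b|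
      = |(1/(L:ℝ)) * ∑ ℓ ∈ Finset.Icc 1 L, u n ℓ x - b| := by
    intro x
    simp only [hptwise]
    rfl
  have hpt : ∀ x : X, |(1/(L:ℝ)) * ∑ ℓ ∈ Finset.Icc 1 L, u n ℓ x - b|
      ≤ ε/4 + ((1/(L:ℝ)) * ∑ ℓ ∈ Finset.Icc 1 L, u n ℓ x - b)^2 / ε := by
    intro x
    set F := (1/(L:ℝ)) * ∑ ℓ ∈ Finset.Icc 1 L, u n ℓ x - b with hF
    clear_value F
    have h1 : ε * |F| ≤ ε * (ε/4 + F^2/ε) := by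
      have h2 : ε * (ε/4 + F^2/ε) = ε^2/4 + F^2 := by
        field_simp
      rw [h2]
      have h3 : 0 ≤ |F| ^ 2 - ε * |F| + ε ^ 2 / 4 := by nlinarith [sq_nonneg (|F| - ε / 2)]
      have h4 : |F| ^ 2 = F ^ 2 := sq_abs F
      linarith
    exact le_of_mul_le_mul_left h1 hε
  have hfinal : (ε/4 : ℝ) + (ε^2/4)/ε < ε := by
    have h4 : (ε^2/4)/ε = ε/4 := by
      field_simp
    rw [h4]; linarith
  calc ∫ x, |(1 / (L : ℝ)) * ∑ ℓ ∈ Finset.Icc 1 L,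
          Set.indicator B (fun _ => (1 : ℝ)) (iterZ T (-((ℓ : ℤ) * t n)) x) - b| ∂μ
      = ∫ x, |(1/(L:ℝ)) * ∑ ℓ ∈ Finset.Icc 1 L, u n ℓ x - b| ∂μ :=
        integral_congr_ae (ae_of_all μ hgoal_eq)
    _ ≤ ∫ x, (ε/4 + ((1/(L:ℝ)) * ∑ ℓ ∈ Finset.Icc 1 L, u n ℓ x - b)^2/ε) ∂μ := by
        refine integral_mono ((hF_int n).abs) ?_ hpt
        exact (integrable_const _).add ((hFsq_int n).div_const ε)
    _ = ε/4 + (∫ x, ((1/(L:ℝ)) * ∑ ℓ ∈ Finset.Icc 1 L, u n ℓ x - b)^2 ∂μ)/ε := by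
        rw [integral_add (integrable_const _) ((hFsq_int n).div_const ε), integral_const,
          integral_div]
        simp [measure_univ]
    _ < ε/4 + (ε^2/4)/ε := by gcongr
    _ < ε := hfinal
end

section
/- Let {e_n} be a sequence of nonnegative integers and {r_n} positive integers. Define words B̃_1 = B_1 = 0, B̃_{n+1} = ∏_{i=0}^{r_n} B̃_n 1^{e_n+i}, and B_{n+1} = (∏_{i=0}^{r_n−1} B_n 1^{c_n+i}) B_n where c_1 = e_1 and c_{n+1} = e_{n+1} + c_n + r_n. Then for all n ≥ 1, B̃_{n+1} = B_{n+1} 1^{Σ_{j=1}^n (e_j + r_j)}. -/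
/-- Moving the spacers of an elevated staircase from the ends of the subcolumns to the
front: with `Bt 1 = B 1 = 0`, `Bt (n+1) = ∏_{i=0}^{r n} Bt n 1^{e n + i}`,
`B (n+1) = (∏_{i=0}^{r n − 1} B n 1^{c n + i}) B n`, `c 1 = e 1` and
`c (n+1) = e (n+1) + c n + r n`, we have `Bt (n+1) = B (n+1) 1^{∑_{j=1}^n (e j + r j)}`
for all `n ≥ 1`. -/
theorem stmt_12 (r : ℕ → ℕ) (hr : ∀ n, 1 ≤ r n) (e : ℕ → ℕ) (c : ℕ → ℕ)
    (hc1 : c 1 = e 1) (hcrec : ∀ n, 1 ≤ n → c (n + 1) = e (n + 1) + c n + r n)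
    (Bt B : ℕ → List Bool) (hBt1 : Bt 1 = [false]) (hB1 : B 1 = [false])
    (hBtrec : ∀ n, 1 ≤ n → Bt (n + 1) =
      List.flatten ((List.range (r n + 1)).map fun i => Bt n ++ List.replicate (e n + i) true))
    (hBrec : ∀ n, 1 ≤ n → B (n + 1) =
      (List.flatten ((List.range (r n)).map fun i => B n ++ List.replicate (c n + i) true))
        ++ B n) :
    ∀ n, 1 ≤ n →
      Bt (n + 1) = B (n + 1) ++ List.replicate (∑ j ∈ Finset.Icc 1 n, (e j + r j)) true := by
  have hcsum : ∀ n, 1 ≤ n → c n + r n = ∑ j ∈ Finset.Icc 1 n, (e j + r j) := by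
    intro n hn
    induction n, hn using Nat.le_induction with
    | base => simp [hc1]
    | succ n hn ih =>
      rw [hcrec n hn, Finset.sum_Icc_succ_top (by omega : 1 ≤ n + 1), ← ih]
      ring
  intro n hn
  induction n, hn using Nat.le_induction with
  | base =>
    rw [hBtrec 1 le_rfl, hBrec 1 le_rfl, hBt1, hB1, hc1, List.range_succ]
    simp [List.append_assoc]
  | succ n hn ih =>
    rw [hBtrec (n + 1) (by omega), hBrec (n + 1) (by omega), ih]
    have hcv : c (n + 1) = e (n + 1) + ∑ j ∈ Finset.Icc 1 n, (e j + r j) := by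
      rw [hcrec n hn]; have := hcsum n hn; omega
    have heq : (fun i => (B (n + 1) ++ List.replicate (∑ j ∈ Finset.Icc 1 n, (e j + r j)) true)
          ++ List.replicate (e (n + 1) + i) true)
        = fun i => B (n + 1) ++ List.replicate (c (n + 1) + i) true := by
      funext i
      rw [List.append_assoc, ← List.replicate_add]
      congr 2
      omega
    rw [heq, List.range_succ]
    have hS : c (n + 1) + r (n + 1) = ∑ j ∈ Finset.Icc 1 (n + 1), (e j + r j) :=
      hcsum (n + 1) (by omega)
    simp [← hS, List.append_assoc]
end
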